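/- Let n ≥ 2 and let u ∈ ℝ^n with uᵢ ≠ 0 for every i. Let s ∈ ℝ^n with sᵢ = sign(uᵢ), a = ‖u‖₁, r = ‖u‖₂, and define the n×n matrix M = u sᵀ + s uᵀ − (3a/r²)·u uᵀ + a·I_n. Then 4n r² − 3a² ≥ a² ≥ 0, both numbers (a − √(4n r² − 3a²))/2 and (a + √(4n r² − 3a²))/2 are eigenvalues of M, and every vector v ∈ ℝ^n orthogonal to both u and s satisfies M v = a·v. -/

import Mathlib

noncomputable section

/-- The ℓ¹ norm on ℝ^n. -/
def l1 {n : ℕ} (x : EuclideanSpace ℝ (Fin n)) : ℝ := ∑ i, |x i|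

theorem stmt9 {n : ℕ} (hn : 2 ≤ n)
    (u : EuclideanSpace ℝ (Fin n)) (hu : ∀ i, u i ≠ 0)
    (s : Fin n → ℝ) (hs : ∀ i, s i = if 0 < u i then 1 else -1)
    (a r : ℝ) (ha : a = l1 u) (hr : r = ‖u‖)
    (M : Matrix (Fin n) (Fin n) ℝ)
    (hM : M = Matrix.vecMulVec (fun i => u i) s + Matrix.vecMulVec s (fun i => u i)
      - (3 * a / r ^ 2) • Matrix.vecMulVec (fun i => u i) (fun i => u i)
      + a • (1 : Matrix (Fin n) (Fin n) ℝ)) :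
    (0 ≤ a ^ 2 ∧ a ^ 2 ≤ 4 * n * r ^ 2 - 3 * a ^ 2) ∧
    (∃ v : Fin n → ℝ, v ≠ 0 ∧
      M.mulVec v = ((a - Real.sqrt (4 * n * r ^ 2 - 3 * a ^ 2)) / 2) • v) ∧
    (∃ v : Fin n → ℝ, v ≠ 0 ∧
      M.mulVec v = ((a + Real.sqrt (4 * n * r ^ 2 - 3 * a ^ 2)) / 2) • v) ∧
    (∀ v : Fin n → ℝ, (∑ i, v i * u i) = 0 → (∑ i, v i * s i) = 0 →
      M.mulVec v = a • v) := by
  -- basic facts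
  have hsu : ∀ i, s i * u i = |u i| := by
    intro i
    rw [hs i]
    rcases (hu i).lt_or_gt with h | h
    · rw [if_neg (not_lt.2 h.le), abs_of_neg h]; ring
    · rw [if_pos h, abs_of_pos h]; ring
  have hss : ∀ i, s i * s i = 1 := by
    intro i; rw [hs i]; split_ifs <;> norm_num
  have S_su : ∑ j, s j * u j = a := by
    rw [ha]; unfold l1; exact Finset.sum_congr rfl fun j _ => hsu j
  have S_us : ∑ j, u j * s j = a := by
    rw [← S_su]; exact Finset.sum_congr rfl fun j _ => mul_comm _ _
  have S_ss : ∑ j, s j * s j = (n : ℝ) := by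
    rw [Finset.sum_congr rfl fun j _ => hss j]; simp
  have S_uu : ∑ j, u j * u j = r ^ 2 := by
    have h1 : ‖u‖ = Real.sqrt (∑ j, (u j) ^ 2) := by
      rw [EuclideanSpace.norm_eq]
      congr 1
      exact Finset.sum_congr rfl fun j _ => by rw [Real.norm_eq_abs, sq_abs]
    rw [hr, h1, Real.sq_sqrt (Finset.sum_nonneg fun j _ => sq_nonneg _)]
    exact Finset.sum_congr rfl fun j _ => (sq (u j)).symm ▸ by ring
  have i0 : Fin n := ⟨0, by omega⟩
  have apos : 0 < a := by
    rw [ha]; unfold l1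
    exact Finset.sum_pos' (fun i _ => abs_nonneg _)
      ⟨i0, Finset.mem_univ _, abs_pos.2 (hu i0)⟩
  have r2pos : 0 < r ^ 2 := by
    rw [← S_uu]
    exact Finset.sum_pos' (fun i _ => mul_self_nonneg _)
      ⟨i0, Finset.mem_univ _, mul_self_pos.2 (hu i0)⟩
  have CS : a ^ 2 ≤ (n : ℝ) * r ^ 2 := by
    have := Finset.sum_mul_sq_le_sq_mul_sq Finset.univ s (fun j => u j)
    rw [S_su] at this
    calc a ^ 2 ≤ (∑ j, s j ^ 2) * ∑ j, (u j) ^ 2 := this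
      _ = (n : ℝ) * r ^ 2 := by
          rw [← S_ss, ← S_uu]
          congr 1 <;> exact Finset.sum_congr rfl fun j _ => sq _
  -- mulVec formula
  have hMv : ∀ (v : Fin n → ℝ) i, M.mulVec v i =
      (∑ j, s j * v j) * u i + (∑ j, u j * v j) * s i
      - (3 * a / r ^ 2) * (∑ j, u j * v j) * u i + a * v i := by
    intro v i
    rw [hM]
    simp only [Matrix.add_mulVec, Matrix.sub_mulVec, Matrix.smul_mulVec,
      Matrix.one_mulVec, Pi.add_apply, Pi.sub_apply, Pi.smul_apply, smul_eq_mul]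
    have h1 : ∀ (x y : Fin n → ℝ), (Matrix.vecMulVec x y).mulVec v i = x i * ∑ j, y j * v j := by
      intro x y
      simp [Matrix.mulVec, Matrix.vecMulVec_apply, dotProduct, Finset.mul_sum, mul_assoc]
    rw [h1, h1, h1]
    ring
  -- clause 4
  have key4 : ∀ v : Fin n → ℝ, (∑ i, v i * u i) = 0 → (∑ i, v i * s i) = 0 →
      M.mulVec v = a • v := by
    intro v h1 h2
    funext i
    have e1 : ∑ j, s j * v j = 0 := by
      rw [← h2]; exact Finset.sum_congr rfl fun j _ => mul_comm _ _
    have e2 : ∑ j, u j * v j = 0 := by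
      rw [← h1]; exact Finset.sum_congr rfl fun j _ => mul_comm _ _
    rw [hMv, e1, e2, Pi.smul_apply, smul_eq_mul]
    ring
  -- sums against eigenvector candidates
  have Ssv : ∀ lam : ℝ, ∑ j, s j * ((lam - 2*a) * u j + r^2 * s j)
      = (lam - 2*a) * a + r^2 * n := by
    intro lam
    have : ∀ j, s j * ((lam - 2*a) * u j + r^2 * s j)
        = (lam - 2*a) * (s j * u j) + r^2 * (s j * s j) := fun j => by ring
    rw [Finset.sum_congr rfl fun j _ => this j, Finset.sum_add_distrib,
      ← Finset.mul_sum, ← Finset.mul_sum, S_su, S_ss]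
  have Suv : ∀ lam : ℝ, ∑ j, u j * ((lam - 2*a) * u j + r^2 * s j)
      = r^2 * (lam - a) := by
    intro lam
    have : ∀ j, u j * ((lam - 2*a) * u j + r^2 * s j)
        = (lam - 2*a) * (u j * u j) + r^2 * (u j * s j) := fun j => by ring
    rw [Finset.sum_congr rfl fun j _ => this j, Finset.sum_add_distrib,
      ← Finset.mul_sum, ← Finset.mul_sum, S_uu, S_us]
    ring
  -- eigen lemma
  have eig : ∀ lam : ℝ, lam ^ 2 - a * lam = (n : ℝ) * r ^ 2 - a ^ 2 →
      M.mulVec (fun i => (lam - 2*a) * u i + r^2 * s i)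
        = lam • ((fun i => (lam - 2*a) * u i + r^2 * s i) : Fin n → ℝ) := by
    intro lam hlam
    funext i
    rw [hMv, Ssv, Suv, Pi.smul_apply, smul_eq_mul]
    have hdiv : 3 * a / r ^ 2 * (r ^ 2 * (lam - a)) = 3 * a * (lam - a) := by
      rw [← mul_assoc, div_mul_cancel₀ _ (ne_of_gt r2pos)]
    rw [hdiv]
    linear_combination (-(u i)) * hlam
  have nzero : ∀ lam : ℝ, lam ≠ a →
      (fun i => (lam - 2*a) * u i + r^2 * s i) ≠ (0 : Fin n → ℝ) := by
    intro lam hne h0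
    have h1 := congrArg (fun w : Fin n → ℝ => ∑ j, u j * w j) h0
    simp only at h1
    rw [Suv] at h1
    simp only [Pi.zero_apply, mul_zero, Finset.sum_const_zero] at h1
    have : lam - a = 0 := by
      rcases mul_eq_zero.1 h1 with h | h
      · exact absurd h (ne_of_gt r2pos)
      · exact h
    exact hne (by linarith)
  set D : ℝ := 4 * n * r ^ 2 - 3 * a ^ 2 with hD
  have hDa : a ^ 2 ≤ D := by rw [hD]; nlinarith [CS]
  have hDnn : 0 ≤ D := le_trans (sq_nonneg a) hDa
  have hsq : Real.sqrt D ^ 2 = D := Real.sq_sqrt hDnn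
  have hsnn : 0 ≤ Real.sqrt D := Real.sqrt_nonneg D
  have hsa : a ≤ Real.sqrt D := by nlinarith
  have hlamm : ((a - Real.sqrt D) / 2) ^ 2 - a * ((a - Real.sqrt D) / 2)
      = (n : ℝ) * r ^ 2 - a ^ 2 := by
    have : Real.sqrt D ^ 2 = 4 * n * r ^ 2 - 3 * a ^ 2 := hsq
    linear_combination this / 4
  have hlamp : ((a + Real.sqrt D) / 2) ^ 2 - a * ((a + Real.sqrt D) / 2)
      = (n : ℝ) * r ^ 2 - a ^ 2 := by
    have : Real.sqrt D ^ 2 = 4 * n * r ^ 2 - 3 * a ^ 2 := hsq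
    linear_combination this / 4
  refine ⟨⟨sq_nonneg a, hDa⟩, ?_, ?_, key4⟩
  · have hne : (a - Real.sqrt D) / 2 ≠ a := ne_of_lt (by linarith)
    exact ⟨_, nzero _ hne, eig _ hlamm⟩
  · by_cases hdeg : Real.sqrt D = a
    · -- degenerate case: all a * s j = n * u j
      have hDa2 : (n : ℝ) * r ^ 2 = a ^ 2 := by
        have : D = a ^ 2 := by rw [← hsq, hdeg]
        rw [hD] at this; linarith
      have hz : ∑ j, (a * s j - (n : ℝ) * u j) ^ 2 = 0 := by
        have expand : ∀ j, (a * s j - (n : ℝ) * u j) ^ 2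
            = a ^ 2 * (s j * s j) - 2 * a * n * (s j * u j) + (n : ℝ)^2 * (u j * u j) :=
          fun j => by ring
        rw [Finset.sum_congr rfl fun j _ => expand j]
        rw [Finset.sum_add_distrib, Finset.sum_sub_distrib,
          ← Finset.mul_sum, ← Finset.mul_sum, ← Finset.mul_sum, S_ss, S_su, S_uu]
        nlinarith [hDa2]
      have hall : ∀ j, a * s j = (n : ℝ) * u j := by
        intro j
        have := (Finset.sum_eq_zero_iff_of_nonneg (fun j _ => sq_nonneg _)).1 hz j
          (Finset.mem_univ j)
        have := pow_eq_zero_iff (n := 2) (by norm_num) |>.1 this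
        linarith
      have hi0 : (0 : ℕ) < n := by omega
      have hi1 : (1 : ℕ) < n := by omega
      set j0 : Fin n := ⟨0, hi0⟩ with hj0
      set j1 : Fin n := ⟨1, hi1⟩ with hj1
      have hj01 : j0 ≠ j1 := by simp [hj0, hj1, Fin.ext_iff]
      set v0 : Fin n → ℝ := fun i => if i = j0 then u j1 else if i = j1 then -(u j0) else 0
        with hv0
      have hsum : ∀ f : Fin n → ℝ, ∑ j, v0 j * f j = u j1 * f j0 - u j0 * f j1 := by
        intro f
        rw [← Finset.sum_subset (Finset.subset_univ ({j0, j1} : Finset (Fin n)))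
          (fun x _ hx => by
            simp only [Finset.mem_insert, Finset.mem_singleton, not_or] at hx
            simp [hv0, hx.1, hx.2])]
        rw [Finset.sum_pair hj01]
        simp [hv0, hj01, hj01.symm]
        ring
      have hperpu : ∑ j, v0 j * u j = 0 := by rw [hsum]; ring
      have hperps : ∑ j, v0 j * s j = 0 := by
        rw [hsum]
        have e0 := hall j0
        have e1 := hall j1
        have : a * (u j1 * s j0 - u j0 * s j1) = 0 := by
          linear_combination (u j1) * e0 - (u j0) * e1
        rcases mul_eq_zero.1 this with h | h
        · exact absurd h (ne_of_gt apos)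
        · exact h
      refine ⟨v0, ?_, ?_⟩
      · intro h0
        have := congrFun h0 j0
        simp [hv0] at this
        exact hu j1 this
      · have := key4 v0 hperpu hperps
        rw [this, hdeg]
        norm_num
    · have hlt : a < Real.sqrt D := lt_of_le_of_ne hsa (Ne.symm hdeg)
      have hne : (a + Real.sqrt D) / 2 ≠ a := ne_of_gt (by linarith)
      exact ⟨_, nzero _ hne, eig _ hlamp⟩
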